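/- Let fⱼ(x,y) = y − x − 2!x² − ⋯ − j!xʲ ∈ ℂ[[x,y]] for j ≥ 1. Then for any i ≠ j, dim_ℂ ℂ[[x,y]]/(fᵢ, fⱼ) = min{i,j} + 1. -/

import Mathlib

set_option linter.unusedSectionVars false

open MvPowerSeries

/-- fⱼ(x,y) = y − x − 2!x² − ⋯ − j!xʲ ∈ ℂ[[x,y]]. -/
noncomputable def fseq (j : ℕ) : MvPowerSeries (Fin 2) ℂ :=
  X 1 - ∑ k ∈ Finset.Icc 1 j, ((C : ℂ →+* MvPowerSeries (Fin 2) ℂ) (k.factorial : ℂ)) * (X 0) ^ k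

section Eval

variable {A : Type*} [CommRing A] [Algebra ℂ A]

/-- The multiplicative weight. -/
noncomputable def wfun (t G : A) (d : Fin 2 →₀ ℕ) : A := t ^ d 0 * G ^ d 1

noncomputable def Dbig (n : ℕ) : Fin 2 →₀ ℕ :=
  Finsupp.single 0 (n - 1) + Finsupp.single 1 (n - 1)

lemma le_Dbig_iff {n : ℕ} (hn : 0 < n) (d : Fin 2 →₀ ℕ) :
    d ≤ Dbig n ↔ d 0 < n ∧ d 1 < n := by
  have h0 : Dbig n 0 = n - 1 := by simp [Dbig]
  have h1 : Dbig n 1 = n - 1 := by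
    simp [Dbig, Finsupp.single_apply, show (0 : Fin 2) ≠ 1 by decide]
  rw [Finsupp.le_def, Fin.forall_fin_two, h0, h1]
  omega

variable {n : ℕ} {t G : A} (hn : 0 < n) (ht : t ^ n = 0) (hG : G ^ n = 0)

lemma wfun_add (u v : Fin 2 →₀ ℕ) : wfun t G (u + v) = wfun t G u * wfun t G v := by
  simp only [wfun, Finsupp.add_apply, pow_add]; ring

include hn ht hG in
lemma wfun_eq_zero {d : Fin 2 →₀ ℕ} (hd : ¬ d ≤ Dbig n) : wfun t G d = 0 := by
  rw [le_Dbig_iff hn] at hd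
  rcases not_and_or.mp hd with h | h
  · have : t ^ d 0 = 0 := by
      rw [show d 0 = n + (d 0 - n) by omega, pow_add, ht, zero_mul]
    simp [wfun, this]
  · have : G ^ d 1 = 0 := by
      rw [show d 1 = n + (d 1 - n) by omega, pow_add, hG, zero_mul]
    simp [wfun, this]

/-- Truncated evaluation of a power series at (t, G). -/
noncomputable def Efun (n : ℕ) (t G : A) (F : MvPowerSeries (Fin 2) ℂ) : A :=
  ∑ d ∈ Finset.Iic (Dbig n), coeff d F • wfun t G d

lemma Efun_add (F F' : MvPowerSeries (Fin 2) ℂ) :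
    Efun n t G (F + F') = Efun n t G F + Efun n t G F' := by
  simp [Efun, add_smul, Finset.sum_add_distrib]

lemma Efun_one : Efun n t G (1 : MvPowerSeries (Fin 2) ℂ) = 1 := by
  classical
  simp only [Efun, coeff_one, ite_smul, zero_smul, Finset.sum_ite_eq' (Finset.Iic (Dbig n)) 0]
  rw [if_pos (Finset.mem_Iic.mpr zero_le)]
  simp [wfun]

lemma Efun_C (c : ℂ) : Efun n t G (C c) = algebraMap ℂ A c := by
  classical
  simp only [Efun, coeff_C, ite_smul, zero_smul, Finset.sum_ite_eq' (Finset.Iic (Dbig n)) 0]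
  rw [if_pos (Finset.mem_Iic.mpr zero_le)]
  simp [wfun, Algebra.algebraMap_eq_smul_one]

include hn ht hG in
lemma Efun_mul (F F' : MvPowerSeries (Fin 2) ℂ) :
    Efun n t G (F * F') = Efun n t G F * Efun n t G F' := by
  classical
  set T := Finset.Iic (Dbig n) with hT
  set h : (Fin 2 →₀ ℕ) × (Fin 2 →₀ ℕ) → A :=
    fun p => (coeff p.1 F * coeff p.2 F') • (wfun t G p.1 * wfun t G p.2) with hh
  have hw0 : ∀ d, d ∉ T → wfun t G d = 0 := by
    intro d hd
    exact wfun_eq_zero hn ht hG (by simpa [hT, Finset.mem_Iic] using hd)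
  set U : Finset ((Fin 2 →₀ ℕ) × (Fin 2 →₀ ℕ)) :=
    (T ×ˢ T).filter (fun p => p.1 + p.2 ∈ T) with hU
  have lhs : Efun n t G (F * F') = ∑ p ∈ U, h p := by
    have step1 : Efun n t G (F * F') =
        ∑ d ∈ T, ∑ p ∈ Finset.HasAntidiagonal.antidiagonal d, h p := by
      rw [Efun]
      refine Finset.sum_congr rfl fun d _ => ?_
      rw [coeff_mul, Finset.sum_smul]
      refine Finset.sum_congr rfl fun p hp => ?_
      rw [Finset.HasAntidiagonal.mem_antidiagonal] at hp
      rw [← hp, wfun_add]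
    have hdisj : (T : Set (Fin 2 →₀ ℕ)).PairwiseDisjoint Finset.HasAntidiagonal.antidiagonal := by
      intro a _ b _ hab
      simp only [Function.onFun]
      rw [Finset.disjoint_left]
      intro p hpa hpb
      rw [Finset.HasAntidiagonal.mem_antidiagonal] at hpa hpb
      exact hab (hpa ▸ hpb)
    rw [step1, ← Finset.sum_biUnion hdisj]
    refine (Finset.sum_subset ?_ ?_).symm
    · intro p hp
      rw [hU, Finset.mem_filter] at hp
      exact Finset.mem_biUnion.mpr ⟨p.1 + p.2, hp.2, Finset.HasAntidiagonal.mem_antidiagonal.mpr rfl⟩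
    · intro p hp hpU
      rw [Finset.mem_biUnion] at hp
      obtain ⟨d, hd, hpd⟩ := hp
      rw [Finset.HasAntidiagonal.mem_antidiagonal] at hpd
      rw [hU, Finset.mem_filter, Finset.mem_product, not_and_or] at hpU
      rcases hpU with h' | h'
      · rcases not_and_or.mp h' with h'' | h''
        · simp [hh, hw0 _ h'']
        · simp [hh, hw0 _ h'']
      · exact absurd (hpd ▸ hd) h'
  have rhs : Efun n t G F * Efun n t G F' = ∑ p ∈ U, h p := by
    have e1 : Efun n t G F * Efun n t G F' = ∑ p ∈ T ×ˢ T, h p := by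
      rw [Efun, Efun, Finset.sum_mul_sum, ← Finset.sum_product']
      refine Finset.sum_congr rfl fun p _ => ?_
      simp only [hh, smul_mul_assoc, mul_smul_comm, smul_smul, mul_comm]
    rw [e1]
    refine (Finset.sum_subset (Finset.filter_subset _ _) ?_).symm
    intro p hp hpU
    simp only [Finset.mem_filter, not_and] at hpU
    have hz : wfun t G p.1 * wfun t G p.2 = 0 := by
      rw [← wfun_add]; exact hw0 _ (hpU hp)
    simp [hh, hz]
  rw [lhs, rhs]


/-- Evaluation algebra hom, given nilpotency witnesses. -/
noncomputable def Ehom (hn : 0 < n) (ht : t ^ n = 0) (hG : G ^ n = 0) :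
    MvPowerSeries (Fin 2) ℂ →ₐ[ℂ] A where
  toFun := Efun n t G
  map_one' := Efun_one
  map_mul' := Efun_mul hn ht hG
  map_zero' := by simp [Efun]
  map_add' := Efun_add
  commutes' := fun c => by rw [← c_eq_algebraMap]; exact Efun_C c

lemma Ehom_X0 (hn : 0 < n) (hn1 : 1 < n) (ht : t ^ n = 0) (hG : G ^ n = 0) :
    Ehom hn ht hG (X 0) = t := by
  classical
  have hmem : Finsupp.single (0 : Fin 2) 1 ∈ Finset.Iic (Dbig n) := by
    rw [Finset.mem_Iic, le_Dbig_iff (by omega)]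
    simp [Finsupp.single_apply]
    omega
  show Efun n t G (X 0) = t
  simp only [Efun, coeff_X, ite_smul, zero_smul,
    Finset.sum_ite_eq' (Finset.Iic (Dbig n)) (Finsupp.single (0:Fin 2) 1)]
  rw [if_pos hmem]
  simp [wfun, Finsupp.single_apply, show (0:Fin 2) ≠ 1 by decide]

lemma Ehom_X1 (hn : 0 < n) (hn1 : 1 < n) (ht : t ^ n = 0) (hG : G ^ n = 0) :
    Ehom hn ht hG (X 1) = G := by
  classical
  have hmem : Finsupp.single (1 : Fin 2) 1 ∈ Finset.Iic (Dbig n) := by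
    rw [Finset.mem_Iic, le_Dbig_iff (by omega)]
    simp [Finsupp.single_apply]
    omega
  show Efun n t G (X 1) = G
  simp only [Efun, coeff_X, ite_smul, zero_smul,
    Finset.sum_ite_eq' (Finset.Iic (Dbig n)) (Finsupp.single (1:Fin 2) 1)]
  rw [if_pos hmem]
  simp [wfun, Finsupp.single_apply, show (1:Fin 2) ≠ 0 by decide]


lemma sub_trunc_mem (hn : 0 < n) (F : MvPowerSeries (Fin 2) ℂ) :
    F - ∑ d ∈ Finset.Iic (Dbig n), monomial d (coeff d F) ∈
      Ideal.span {(X 0 : MvPowerSeries (Fin 2) ℂ) ^ n, (X 1) ^ n} := by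
  classical
  set R1 : MvPowerSeries (Fin 2) ℂ :=
    fun d => coeff (d + Finsupp.single 0 n) F with hR1
  set R2 : MvPowerSeries (Fin 2) ℂ :=
    fun d => if d 0 < n then coeff (d + Finsupp.single 1 n) F else 0 with hR2
  have key : F - ∑ d ∈ Finset.Iic (Dbig n), monomial d (coeff d F)
      = (X 0) ^ n * R1 + (X 1) ^ n * R2 := by
    ext d
    rw [map_sub, map_add]
    have hc : coeff d (∑ d' ∈ Finset.Iic (Dbig n), monomial d' (coeff d' F))
        = if d ∈ Finset.Iic (Dbig n) then coeff d F else 0 := by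
      rw [map_sum]
      simp only [coeff_monomial]
      exact Finset.sum_ite_eq (Finset.Iic (Dbig n)) d _
    rw [hc]
    rw [X_pow_eq, X_pow_eq, coeff_monomial_mul, coeff_monomial_mul]
    have hle0 : Finsupp.single (0 : Fin 2) n ≤ d ↔ n ≤ d 0 := Finsupp.single_le_iff
    have hle1 : Finsupp.single (1 : Fin 2) n ≤ d ↔ n ≤ d 1 := Finsupp.single_le_iff
    have hmem : (d ∈ Finset.Iic (Dbig n)) ↔ (d 0 < n ∧ d 1 < n) := by
      rw [Finset.mem_Iic, le_Dbig_iff hn]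
    have hv1 : Finsupp.single (0 : Fin 2) n ≤ d →
        coeff (d - Finsupp.single 0 n) R1 = coeff d F := by
      intro h
      rw [coeff_apply]
      simp only [hR1]
      rw [tsub_add_cancel_of_le h]
    have hv2 : Finsupp.single (1 : Fin 2) n ≤ d →
        coeff (d - Finsupp.single 1 n) R2 = if d 0 < n then coeff d F else 0 := by
      intro h
      rw [coeff_apply]
      simp only [hR2]
      rw [tsub_add_cancel_of_le h, Finsupp.tsub_apply]
      simp [Finsupp.single_apply, show (1:Fin 2) ≠ 0 by decide]
    simp only [hle0, hle1, hmem]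
    by_cases h0 : n ≤ d 0 <;> by_cases h1 : n ≤ d 1
    · rw [if_pos h0, if_pos h1, one_mul, one_mul, hv1 (hle0.mpr h0), hv2 (hle1.mpr h1),
        if_neg (show ¬(d 0 < n ∧ d 1 < n) by omega), if_neg (show ¬ d 0 < n by omega)]
      ring
    · rw [if_pos h0, if_neg h1, one_mul, hv1 (hle0.mpr h0),
        if_neg (show ¬(d 0 < n ∧ d 1 < n) by omega)]
      ring
    · rw [if_neg h0, if_pos h1, one_mul, hv2 (hle1.mpr h1),
        if_neg (show ¬(d 0 < n ∧ d 1 < n) by omega), if_pos (show d 0 < n by omega)]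
      ring
    · rw [if_neg h0, if_neg h1, if_pos (show d 0 < n ∧ d 1 < n by omega)]
      ring
  rw [key]
  exact add_mem
    (Ideal.mul_mem_right _ _ (Ideal.subset_span (Set.mem_insert _ _)))
    (Ideal.mul_mem_right _ _ (Ideal.subset_span (Set.mem_insert_of_mem _ rfl)))


lemma monomial_eq_prod (d : Fin 2 →₀ ℕ) :
    monomial d (1 : ℂ) = (X 0 : MvPowerSeries (Fin 2) ℂ) ^ (d 0) * (X 1) ^ (d 1) := by
  have hd : d = Finsupp.single 0 (d 0) + Finsupp.single 1 (d 1) := by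
    ext i
    fin_cases i <;>
      simp [Finsupp.single_apply]
  rw [X_pow_eq, X_pow_eq, monomial_mul_monomial, one_mul]
  conv_lhs => rw [hd]

end Eval

section Main

/-- The "g" series: x + 2!x² + ⋯ + i!xⁱ. -/
noncomputable def gpoly (i : ℕ) : MvPowerSeries (Fin 2) ℂ :=
  ∑ k ∈ Finset.Icc 1 i, (C (k.factorial : ℂ)) * (X 0) ^ k

lemma fseq_eq (i : ℕ) : fseq i = X 1 - gpoly i := rfl

lemma X0_dvd_gpoly (i : ℕ) : (X 0 : MvPowerSeries (Fin 2) ℂ) ∣ gpoly i := by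
  refine Finset.dvd_sum fun k hk => ?_
  rw [Finset.mem_Icc] at hk
  exact (dvd_pow_self (X 0) (by omega)).mul_left _

lemma Icc_one_eq_Ioc (x : ℕ) : Finset.Icc 1 x = Finset.Ioc 0 x := by
  ext k
  simp only [Finset.mem_Icc, Finset.mem_Ioc]
  omega

lemma X0_pow_mem (i j : ℕ) (hij : i < j) :
    (X 0 : MvPowerSeries (Fin 2) ℂ) ^ (i + 1) ∈
      Ideal.span ({fseq i, fseq j} : Set (MvPowerSeries (Fin 2) ℂ)) := by
  classical
  set u : MvPowerSeries (Fin 2) ℂ :=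
    ∑ k ∈ Finset.Ioc i j, (C (k.factorial : ℂ)) * (X 0) ^ (k - (i + 1)) with hu
  have hsplit : fseq j - fseq i = -((X 0) ^ (i + 1) * u) := by
    rw [fseq_eq, fseq_eq, sub_sub_sub_cancel_left, hu, Finset.mul_sum]
    rw [gpoly, gpoly, Icc_one_eq_Ioc, Icc_one_eq_Ioc,
      ← Finset.sum_Ioc_consecutive _ (Nat.zero_le i) (le_of_lt hij)]
    rw [sub_add_cancel_left, neg_inj]
    refine Finset.sum_congr rfl fun k hk => ?_
    rw [Finset.mem_Ioc] at hk
    have hx : (X 0 : MvPowerSeries (Fin 2) ℂ) ^ k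
        = (X 0) ^ (i + 1) * (X 0) ^ (k - (i + 1)) := by
      rw [← pow_add]
      congr 1
      omega
    rw [hx]
    ring
  have hcc : constantCoeff u = ((i + 1).factorial : ℂ) := by
    rw [hu, map_sum]
    rw [Finset.sum_eq_single (i + 1)]
    · simp
    · intro k hk hk'
      rw [Finset.mem_Ioc] at hk
      simp only [map_mul, map_pow, constantCoeff_X]
      rw [zero_pow (by omega)]
      ring
    · intro h
      exact absurd (Finset.mem_Ioc.mpr ⟨by omega, by omega⟩) h
  have hunit : IsUnit u := by
    rw [isUnit_iff_constantCoeff, hcc, isUnit_iff_ne_zero]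
    exact_mod_cast Nat.factorial_ne_zero (i + 1)
  have hmem : (X 0 : MvPowerSeries (Fin 2) ℂ) ^ (i + 1) * u ∈
      Ideal.span ({fseq i, fseq j} : Set (MvPowerSeries (Fin 2) ℂ)) := by
    rw [show (X 0 : MvPowerSeries (Fin 2) ℂ) ^ (i + 1) * u = fseq i - fseq j by
      rw [← neg_sub, hsplit, neg_neg]]
    exact sub_mem (Ideal.subset_span (Set.mem_insert _ _))
      (Ideal.subset_span (Set.mem_insert_of_mem _ rfl))
  have := Ideal.mul_mem_right (↑hunit.unit⁻¹) _ hmem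
  rwa [mul_assoc, hunit.mul_val_inv, mul_one] at this


lemma X1_pow_mem (i j : ℕ) (hij : i < j) :
    (X 1 : MvPowerSeries (Fin 2) ℂ) ^ (i + 1) ∈
      Ideal.span ({fseq i, fseq j} : Set (MvPowerSeries (Fin 2) ℂ)) := by
  set I := Ideal.span ({fseq i, fseq j} : Set (MvPowerSeries (Fin 2) ℂ)) with hI
  obtain ⟨h, hh⟩ := X0_dvd_gpoly i
  rw [← Ideal.Quotient.eq_zero_iff_mem, map_pow]
  have h1 : Ideal.Quotient.mk I (X 1) = Ideal.Quotient.mk I (gpoly i) := by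
    rw [Ideal.Quotient.eq]
    exact Ideal.subset_span (Set.mem_insert _ _)
  rw [h1, ← map_pow, hh, mul_pow, map_mul,
    Ideal.Quotient.eq_zero_iff_mem.mpr (X0_pow_mem i j hij), zero_mul]

lemma span_le_I (i j : ℕ) (hij : i < j) :
    Ideal.span ({(X 0 : MvPowerSeries (Fin 2) ℂ) ^ (i + 1), (X 1) ^ (i + 1)} :
        Set (MvPowerSeries (Fin 2) ℂ)) ≤
      Ideal.span ({fseq i, fseq j} : Set (MvPowerSeries (Fin 2) ℂ)) := by
  rw [Ideal.span_le]
  rintro x (rfl | rfl)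
  · exact X0_pow_mem i j hij
  · exact X1_pow_mem i j hij

set_option maxHeartbeats 1000000 in
lemma key (i j : ℕ) (hi : 1 ≤ i) (hij : i < j) :
    FiniteDimensional ℂ
      (MvPowerSeries (Fin 2) ℂ ⧸
        Ideal.span ({fseq i, fseq j} : Set (MvPowerSeries (Fin 2) ℂ))) ∧
    Module.finrank ℂ
      (MvPowerSeries (Fin 2) ℂ ⧸
        Ideal.span ({fseq i, fseq j} : Set (MvPowerSeries (Fin 2) ℂ))) = i + 1 := by
  classical
  set n := i + 1 with hn
  set I := Ideal.span ({fseq i, fseq j} : Set (MvPowerSeries (Fin 2) ℂ)) with hI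
  set A := AdjoinRoot ((Polynomial.X : Polynomial ℂ) ^ n) with hA
  set t : A := AdjoinRoot.root _ with htdef
  have ht : t ^ n = 0 := by
    rw [htdef, ← AdjoinRoot.mk_X, ← map_pow, AdjoinRoot.mk_self]
  set G : A := ∑ k ∈ Finset.Icc 1 i, (algebraMap ℂ A (k.factorial : ℂ)) * t ^ k with hGdef
  have hGdvd : t ∣ G := by
    refine Finset.dvd_sum fun k hk => ?_
    rw [Finset.mem_Icc] at hk
    exact (dvd_pow_self t (by omega)).mul_left _
  have hG : G ^ n = 0 := by
    obtain ⟨c, hc⟩ := hGdvd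
    rw [hc, mul_pow, ht, zero_mul]
  have hn0 : 0 < n := by omega
  have hn1 : 1 < n := by omega
  set E : MvPowerSeries (Fin 2) ℂ →ₐ[ℂ] A := Ehom hn0 ht hG with hE
  have hEC : ∀ c : ℂ, E (C c) = algebraMap ℂ A c := fun c => by
    rw [c_eq_algebraMap]; exact E.commutes c
  have hEg : E (gpoly i) = G := by
    rw [gpoly, map_sum, hGdef]
    refine Finset.sum_congr rfl fun k _ => ?_
    rw [map_mul, map_pow, hEC, hE, Ehom_X0 hn0 hn1]
  have hEfi : E (fseq i) = 0 := by
    rw [fseq_eq, map_sub, hE, Ehom_X1 hn0 hn1, ← hE, hEg, sub_self]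
  have hEfj : E (fseq j) = 0 := by
    rw [fseq_eq, map_sub, hE, Ehom_X1 hn0 hn1, ← hE]
    rw [gpoly, map_sum, Icc_one_eq_Ioc,
      ← Finset.sum_Ioc_consecutive _ (Nat.zero_le i) (le_of_lt hij)]
    have hz : ∑ k ∈ Finset.Ioc i j, E ((C (k.factorial : ℂ)) * (X 0) ^ k) = 0 := by
      refine Finset.sum_eq_zero fun k hk => ?_
      rw [Finset.mem_Ioc] at hk
      rw [map_mul, map_pow, hE, Ehom_X0 hn0 hn1]
      have : t ^ k = 0 := by
        rw [show k = n + (k - n) by omega, pow_add, ht, zero_mul]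
      rw [this, mul_zero]
    rw [hz, add_zero, ← Icc_one_eq_Ioc]
    have : ∑ k ∈ Finset.Icc 1 i, E ((C (k.factorial : ℂ)) * (X 0) ^ k)
        = E (gpoly i) := by rw [gpoly, map_sum]
    rw [this, hEg, sub_self]
  have hIker : ∀ a ∈ I, E a = 0 := by
    intro a ha
    rw [hI] at ha
    obtain ⟨u, v, huv⟩ := Ideal.mem_span_pair.mp ha
    rw [← huv, map_add, map_mul, map_mul, hEfi, hEfj, mul_zero, mul_zero, add_zero]
  set Ebar : (MvPowerSeries (Fin 2) ℂ ⧸ I) →ₐ[ℂ] A := Ideal.Quotient.liftₐ I E hIker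
    with hEbar
  set xb : MvPowerSeries (Fin 2) ℂ ⧸ I := Ideal.Quotient.mk I (X 0) with hxb
  have hx : (Polynomial.aeval xb) ((Polynomial.X : Polynomial ℂ) ^ n) = 0 := by
    rw [map_pow, Polynomial.aeval_X, hxb, ← map_pow,
      Ideal.Quotient.eq_zero_iff_mem]
    exact X0_pow_mem i j hij
  set φ : A →ₐ[ℂ] (MvPowerSeries (Fin 2) ℂ ⧸ I) := AdjoinRoot.liftAlgHom _ (Algebra.ofId ℂ _) xb hx with hφ
  have hφt : φ t = xb := by
    rw [hφ, htdef]
    apply AdjoinRoot.liftAlgHom_root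
  have hEbarmk : ∀ F, Ebar (Ideal.Quotient.mk I F) = E F := fun F => by
    rw [hEbar]
    exact Ideal.Quotient.liftₐ_apply I E hIker _
  have comp1 : Ebar.comp φ = AlgHom.id ℂ A := by
    refine AdjoinRoot.algHom_ext ?_
    rw [AlgHom.comp_apply, AlgHom.id_apply, ← htdef, hφt, hxb, hEbarmk, hE,
      Ehom_X0 hn0 hn1]
  -- image of gpoly under mk
  have hφG : φ G = Ideal.Quotient.mk I (gpoly i) := by
    rw [hGdef, map_sum, gpoly, map_sum]
    refine Finset.sum_congr rfl fun k _ => ?_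
    rw [map_mul, map_pow, hφt, AlgHom.commutes, hxb, map_mul, map_pow,
      c_eq_algebraMap, ← Ideal.Quotient.algebraMap_eq, ← IsScalarTower.algebraMap_apply]
  have hmkX1 : Ideal.Quotient.mk I (X 1) = Ideal.Quotient.mk I (gpoly i) := by
    rw [Ideal.Quotient.eq]
    exact Ideal.subset_span (Set.mem_insert _ _)
  have comp2 : φ.comp Ebar = AlgHom.id ℂ (MvPowerSeries (Fin 2) ℂ ⧸ I) := by
    refine Ideal.Quotient.algHom_ext ℂ (AlgHom.ext fun F => ?_)
    rw [AlgHom.comp_apply, AlgHom.comp_apply, Ideal.Quotient.mkₐ_eq_mk, hEbarmk]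
    rw [AlgHom.comp_apply, Ideal.Quotient.mkₐ_eq_mk, AlgHom.id_apply]
    have hEF : E F = ∑ d ∈ Finset.Iic (Dbig n), coeff d F • wfun t G d := rfl
    rw [hEF, map_sum]
    have hterm : ∀ d ∈ Finset.Iic (Dbig n),
        φ (coeff d F • wfun t G d)
          = Ideal.Quotient.mk I (monomial d (coeff d F)) := by
      intro d _
      have hmono : (monomial d) ((coeff d) F)
          = ((coeff d) F) • (monomial d (1 : ℂ)) := by
        rw [← map_smul, smul_eq_mul, mul_one]
      rw [map_smul, wfun, map_mul, map_pow, map_pow, hφt, hφG, ← hmkX1,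
        ← map_pow, ← map_pow, ← map_mul, ← monomial_eq_prod, hmono,
        ← Ideal.Quotient.mkₐ_eq_mk ℂ I, map_smul]
    rw [Finset.sum_congr rfl hterm, ← map_sum, Ideal.Quotient.eq]
    have h2 := neg_mem (span_le_I i j hij (sub_trunc_mem hn0 F))
    rwa [neg_sub] at h2
  -- transfer finiteness along the equivalence
  set e : A ≃ₐ[ℂ] (MvPowerSeries (Fin 2) ℂ ⧸ I) := AlgEquiv.ofAlgHom φ Ebar comp2 comp1
    with he
  have hmonic : ((Polynomial.X : Polynomial ℂ) ^ n).Monic := Polynomial.monic_X_pow n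
  set pb := AdjoinRoot.powerBasis' hmonic with hpb
  have hfinA : FiniteDimensional ℂ A := Module.Finite.of_basis pb.basis
  have hrankA : Module.finrank ℂ A = n := by
    rw [Module.finrank_eq_card_basis pb.basis]
    simp [hpb]
  constructor
  · exact Module.Finite.equiv e.toLinearEquiv
  · rw [← e.toLinearEquiv.finrank_eq, hrankA]

end Main


/-- For i ≠ j (both ≥ 1), dim_ℂ ℂ[[x,y]]/(fᵢ,fⱼ) = min{i,j} + 1. -/
theorem stmt_12 (i j : ℕ) (hi : 1 ≤ i) (hj : 1 ≤ j) (hij : i ≠ j) :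
    FiniteDimensional ℂ
      (MvPowerSeries (Fin 2) ℂ ⧸
        Ideal.span ({fseq i, fseq j} : Set (MvPowerSeries (Fin 2) ℂ))) ∧
    Module.finrank ℂ
      (MvPowerSeries (Fin 2) ℂ ⧸
        Ideal.span ({fseq i, fseq j} : Set (MvPowerSeries (Fin 2) ℂ))) =
      min i j + 1 := by
  rcases lt_or_ge i j with h | h
  · rw [min_eq_left h.le]
    exact key i j hi h
  · have hlt : j < i := lt_of_le_of_ne h (Ne.symm hij)
    rw [Set.pair_comm (fseq i) (fseq j), min_comm i j, min_eq_left hlt.le]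
    exact key j i hj hlt
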